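/- Pathwise superhedging inequality H^II: for any continuous path (S_t)_{t∈[0,T]} with b̲ < S_0 < b̄ and any K < b̄, one has 1{S̄_T ≥ b̄, S̲_T ≤ b̲} ≤ (S_T−K)^+/(b̄−K) + (b̄−S_T)/(b̄−K)·1{S̄_T ≥ b̄}. -/

import Mathlib

open Set
open scoped Classical

/-- Pathwise superhedging inequality H^II for the double touch option. -/
theorem stmt3 (T lb ub K : ℝ) (S : ℝ → ℝ)
    (hT : 0 < T) (hcont : ContinuousOn S (Set.Icc 0 T))
    (hlb : 0 < lb) (h1 : lb < S 0) (h2 : S 0 < ub)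
    (hK0 : 0 < K) (hK : K < ub) :
    (if ub ≤ sSup (S '' Set.Icc 0 T) ∧ sInf (S '' Set.Icc 0 T) ≤ lb
      then (1 : ℝ) else 0)
      ≤ max (S T - K) 0 / (ub - K)
        + (ub - S T) / (ub - K) *
          (if ub ≤ sSup (S '' Set.Icc 0 T) then (1 : ℝ) else 0) := by
  have hd : 0 < ub - K := by linarith
  have hmax0 : (0:ℝ) ≤ max (S T - K) 0 / (ub - K) :=
    div_nonneg (le_max_right _ _) hd.le
  by_cases h : ub ≤ sSup (S '' Set.Icc 0 T)
  · simp only [h, true_and, if_true, mul_one]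
    have hge : (1:ℝ) ≤ max (S T - K) 0 / (ub - K) + (ub - S T) / (ub - K) := by
      rw [← add_div, le_div_iff₀ hd]
      have := le_max_left (S T - K) 0
      have := le_max_right (S T - K) 0
      linarith
    split <;> linarith
  · simp only [h, false_and, if_false, mul_zero, add_zero]
    exact hmax0
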